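/- arXiv:2008.13543 — 2 statements merged into one kernel-verified Lean document; each statement's English description precedes it below -/
import Mathlib

section
/- The partial indices n_j in a Birkhoff factorization of a continuous invertible matrix function M on the unit circle are not unique in general, but their sum ∑ n_j is uniquely determined by M: it equals the winding number of det M(z) around 0. -/
open Real

private lemma finset_prod_zpow' {ι : Type*} (s : Finset ι) (z : ℂ) (hz : z ≠ 0) (m : ι → ℤ) :
    ∏ j ∈ s, z ^ m j = z ^ (∑ j ∈ s, m j) := by
  classical
  induction s using Finset.induction_on with
  | empty => simp
  | @insert a s ha ih =>
      rw [Finset.prod_insert ha, Finset.sum_insert ha, ih, zpow_add₀ hz]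

/-- A continuous function with values in `2πiℤ` is constant. -/
private lemma const_of_int_lift {h : ℝ → ℂ} (hc : Continuous h)
    (hk : ∀ θ : ℝ, ∃ k : ℤ, h θ = k * (2 * π * Complex.I)) (a b : ℝ) : h a = h b := by
  obtain ⟨ka, hka⟩ := hk a
  obtain ⟨kb, hkb⟩ := hk b
  suffices hab : ka = kb by rw [hka, hkb, hab]
  by_contra hne
  set ψ : ℝ → ℝ := fun θ => (h θ).im with hψ
  have hψc : Continuous ψ := Complex.continuous_im.comp hc
  have hm : ∀ θ, ∃ k : ℤ, ψ θ = k * (2 * π) := by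
    intro θ
    obtain ⟨k, hk'⟩ := hk θ
    exact ⟨k, by rw [hψ]; simp only; rw [hk']; simp⟩
  have hπ : (0:ℝ) < π := Real.pi_pos
  have hψa : ψ a = ka * (2 * π) := by rw [hψ]; simp only; rw [hka]; simp
  have hψb : ψ b = kb * (2 * π) := by rw [hψ]; simp only; rw [hkb]; simp
  set c : ℝ := (min ka kb : ℤ) * (2 * π) + π with hcdef
  have hmem : c ∈ Set.uIcc (ψ a) (ψ b) := by
    rw [Set.mem_uIcc, hψa, hψb]
    rcases lt_or_gt_of_ne hne with hlt | hlt
    · left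
      have h1 : (ka : ℝ) + 1 ≤ (kb : ℝ) := by exact_mod_cast hlt
      have hminc : ((min ka kb : ℤ) : ℝ) = (ka : ℝ) := by rw [min_eq_left hlt.le]
      constructor
      · rw [hcdef, hminc]; nlinarith
      · rw [hcdef, hminc]; nlinarith
    · right
      have h1 : (kb : ℝ) + 1 ≤ (ka : ℝ) := by exact_mod_cast hlt
      have hminc : ((min ka kb : ℤ) : ℝ) = (kb : ℝ) := by rw [min_eq_right hlt.le]
      constructor
      · rw [hcdef, hminc]; nlinarith
      · rw [hcdef, hminc]; nlinarith
  obtain ⟨θ, _, hθc⟩ := intermediate_value_uIcc hψc.continuousOn hmem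
  obtain ⟨k, hkθ⟩ := hm θ
  have hceq : ((min ka kb : ℤ) : ℝ) * (2 * π) + π = (k : ℝ) * (2 * π) := by
    rw [← hcdef, ← hθc, hkθ]
  have h3 : ((2 * min ka kb + 1 : ℤ) : ℝ) * π = ((2 * k : ℤ) : ℝ) * π := by
    push_cast at hceq ⊢
    linarith [hceq]
  have h4 : (2 * min ka kb + 1 : ℤ) = 2 * k := by
    have := mul_right_cancel₀ (ne_of_gt hπ) h3
    exact_mod_cast this
  omega

/-- `0 < Re (y / x)` when `y` is close to `x ≠ 0`. -/
private lemma re_div_pos' {x y : ℂ} (hx : x ≠ 0) (h : dist y x < ‖x‖) : 0 < (y / x).re := by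
  have hx' : 0 < ‖x‖ := norm_pos_iff.mpr hx
  have h1 : ‖y / x - 1‖ < 1 := by
    have : y / x - 1 = (y - x) / x := by field_simp
    rw [this, norm_div, div_lt_one hx', ← dist_eq_norm]
    exact h
  have h2 : |(y / x - 1).re| ≤ ‖y / x - 1‖ := by
    exact Complex.abs_re_le_norm _
  have h3 : (y / x - 1).re = (y / x).re - 1 := by simp [Complex.sub_re]
  have := abs_lt.mp (lt_of_le_of_lt h2 h1)
  linarith [this.1]

/-- A continuous logarithm, along a circle of radius `r < 1`, of a function holomorphic on the
unit disk, continuous and nonvanishing on the closed disk; moreover the lift is `2π`-periodic. -/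
private lemma exists_circle_lift {f : ℂ → ℂ}
    (hfc : ContinuousOn f (Metric.closedBall 0 1))
    (hfd : DifferentiableOn ℂ f (Metric.ball 0 1))
    (hne : ∀ z ∈ Metric.closedBall (0:ℂ) 1, f z ≠ 0)
    {r : ℝ} (hr0 : 0 < r) (hr1 : r < 1) :
    ∃ v : ℝ → ℂ, Continuous v ∧ (∀ θ : ℝ, Complex.exp (v θ) = f (circleMap 0 r θ)) ∧
      ∀ θ : ℝ, v (θ + 2 * π) = v θ := by
  have hmemb : ∀ θ : ℝ, circleMap 0 r θ ∈ Metric.ball (0:ℂ) 1 := by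
    intro θ
    rw [Metric.mem_ball, Complex.dist_eq, sub_zero, show ‖circleMap 0 r θ‖ = |r| from
      norm_circleMap_zero r θ, abs_of_pos hr0]
    exact hr1
  have hmemc : ∀ θ : ℝ, circleMap 0 r θ ∈ Metric.closedBall (0:ℂ) 1 :=
    fun θ => Metric.ball_subset_closedBall (hmemb θ)
  have han : AnalyticOnNhd ℂ f (Metric.ball 0 1) := hfd.analyticOnNhd Metric.isOpen_ball
  set F : ℂ → ℂ := fun z => deriv f z / f z with hF
  have hFd : ∀ z ∈ Metric.ball (0:ℂ) 1, DifferentiableAt ℂ F z := by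
    intro z hz
    exact ((han.deriv z hz).differentiableAt).div
      (hfd.differentiableAt (Metric.isOpen_ball.mem_nhds hz))
      (hne z (Metric.ball_subset_closedBall hz))
  have hFc : ContinuousOn F (Metric.ball 0 1) := fun z hz =>
    (hFd z hz).continuousAt.continuousWithinAt
  set φ : ℝ → ℂ := fun θ => circleMap 0 r θ * Complex.I * F (circleMap 0 r θ) with hφ
  have hφc : Continuous φ := by
    apply Continuous.mul
    · exact (continuous_circleMap 0 r).mul continuous_const
    · exact hFc.comp_continuous (continuous_circleMap 0 r) hmemb
  set v : ℝ → ℂ := fun θ => Complex.log (f (circleMap 0 r 0)) + ∫ t in (0:ℝ)..θ, φ t with hv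
  have hvd : ∀ θ : ℝ, HasDerivAt v (φ θ) θ := by
    intro θ
    exact ((hφc.integral_hasStrictDerivAt 0 θ).hasDerivAt).const_add _
  have hvc : Continuous v := by
    have : Differentiable ℝ v := fun θ => (hvd θ).differentiableAt
    exact this.continuous
  have hexp : ∀ θ : ℝ, Complex.exp (v θ) = f (circleMap 0 r θ) := by
    set Φ : ℝ → ℂ := fun θ => f (circleMap 0 r θ) * Complex.exp (-v θ) with hΦ
    have hΦd : ∀ θ : ℝ, HasDerivAt Φ 0 θ := by
      intro θ
      have h1 : HasDerivAt (fun t : ℝ => f (circleMap 0 r t))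
          ((circleMap 0 r θ * Complex.I) • deriv f (circleMap 0 r θ)) θ := by
        have hfz : HasDerivAt f (deriv f (circleMap 0 r θ)) (circleMap 0 r θ) :=
          (hfd.differentiableAt (Metric.isOpen_ball.mem_nhds (hmemb θ))).hasDerivAt
        exact hfz.scomp θ (hasDerivAt_circleMap 0 r θ)
      have h2 : HasDerivAt (fun t : ℝ => Complex.exp (-v t))
          (Complex.exp (-v θ) * (-φ θ)) θ := ((hvd θ).neg).cexp
      have h3 := h1.mul h2
      convert h3 using 1
      · rfl
      · rfl
      have hfne := hne _ (hmemc θ)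
      rw [smul_eq_mul, hφ, hF]
      simp only
      field_simp
      ring
    have hconst : ∀ θ : ℝ, Φ θ = Φ 0 := fun θ =>
      is_const_of_deriv_eq_zero (fun t => (hΦd t).differentiableAt)
        (fun t => (hΦd t).deriv) θ 0
    have hΦ0 : Φ 0 = 1 := by
      rw [hΦ]
      simp only
      rw [hv]
      simp only
      rw [intervalIntegral.integral_same, add_zero, Complex.exp_neg,
        Complex.exp_log (hne _ (hmemc 0))]
      exact mul_inv_cancel₀ (hne _ (hmemc 0))
    intro θ
    have h5 : f (circleMap 0 r θ) * Complex.exp (-v θ) = 1 := (hconst θ).trans hΦ0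
    rw [Complex.exp_neg] at h5
    exact ((mul_inv_eq_one₀ (Complex.exp_ne_zero _)).mp h5).symm
  have hper0 : v (2 * π) = v 0 := by
    have hint : (∮ z in C(0, r), F z) = 0 :=
      Complex.circleIntegral_eq_zero_of_differentiable_on_off_countable hr0.le
        Set.countable_empty (hFc.mono (Metric.closedBall_subset_ball hr1))
        (fun z hz => hFd z (Metric.ball_subset_ball hr1.le hz.1))
    have hsub : v (2 * π) - v 0 = ∮ z in C(0, r), F z := by
      rw [hv]
      simp only
      rw [intervalIntegral.integral_same, circleIntegral]
      simp only [deriv_circleMap, smul_eq_mul, hφ]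
      ring
    rw [hint] at hsub
    exact sub_eq_zero.mp hsub
  have hper : ∀ θ : ℝ, v (θ + 2 * π) = v θ := by
    set h : ℝ → ℂ := fun θ => v (θ + 2 * π) - v θ with hh
    have hhc : Continuous h := (hvc.comp (continuous_id.add continuous_const)).sub hvc
    have hhk : ∀ θ : ℝ, ∃ k : ℤ, h θ = k * (2 * π * Complex.I) := by
      intro θ
      have hee : Complex.exp (v (θ + 2 * π)) = Complex.exp (v θ) := by
        rw [hexp, hexp, periodic_circleMap 0 r θ]
      obtain ⟨k, hk⟩ := Complex.exp_eq_exp_iff_exists_int.mp hee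
      exact ⟨k, by rw [hh]; simp only; rw [hk]; ring⟩
    intro θ
    have h6 := const_of_int_lift hhc hhk θ 0
    have h0 : h 0 = 0 := by rw [hh]; simp only; rw [zero_add, hper0, sub_self]
    have h7 : h θ = 0 := h6.trans h0
    rw [hh] at h7
    simp only at h7
    exact sub_eq_zero.mp h7
  exact ⟨v, hvc, hexp, hper⟩

/-- The sum of the partial indices in a Birkhoff factorization of `M` equals the winding
number of `det M` around `0`, expressed via a continuous logarithm `g` of
`θ ↦ det M (exp (iθ))`: the winding number is `w` where `g (2π) - g 0 = 2πi·w`. -/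
theorem birkhoff_sum_partial_indices_eq_winding (n : ℕ) (M : ℂ → Matrix (Fin n) (Fin n) ℂ)
    (hMc : ∀ i j, ContinuousOn (fun z => M z i j) (Metric.sphere (0 : ℂ) 1))
    (hMinv : ∀ z ∈ Metric.sphere (0 : ℂ) 1, IsUnit (M z))
    -- a Birkhoff factorization `M = A₊ D A₋`, with `B w = A₋ (1/w)`:
    (Ap B : ℂ → Matrix (Fin n) (Fin n) ℂ) (ind : Fin n → ℤ)
    (hApc : ∀ i j, ContinuousOn (fun z => Ap z i j) (Metric.closedBall (0 : ℂ) 1))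
    (hApd : ∀ i j, DifferentiableOn ℂ (fun z => Ap z i j) (Metric.ball (0 : ℂ) 1))
    (hApinv : ∀ z ∈ Metric.closedBall (0 : ℂ) 1, IsUnit (Ap z))
    (hBc : ∀ i j, ContinuousOn (fun w => B w i j) (Metric.closedBall (0 : ℂ) 1))
    (hBd : ∀ i j, DifferentiableOn ℂ (fun w => B w i j) (Metric.ball (0 : ℂ) 1))
    (hBinv : ∀ w ∈ Metric.closedBall (0 : ℂ) 1, IsUnit (B w))
    (hfact : ∀ z ∈ Metric.sphere (0 : ℂ) 1,
      M z = Ap z * Matrix.diagonal (fun j => z ^ (ind j)) * B z⁻¹)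
    -- a continuous logarithm of `det M` along the circle and the winding number `w`:
    (g : ℝ → ℂ) (hg : Continuous g)
    (hlog : ∀ θ : ℝ, Complex.exp (g θ) = (M (Complex.exp (θ * Complex.I))).det)
    (w : ℤ) (hw : g (2 * π) - g 0 = 2 * π * Complex.I * w) :
    (∑ j, ind j) = w := by
  classical
  set N : ℤ := ∑ j, ind j with hN
  set z : ℝ → ℂ := fun θ => Complex.exp (θ * Complex.I) with hz
  have hzc : Continuous z := Complex.continuous_exp.comp
    (Complex.continuous_ofReal.mul continuous_const)
  have hzne : ∀ θ, z θ ≠ 0 := fun θ => Complex.exp_ne_zero _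
  have hznorm : ∀ θ : ℝ, ‖z θ‖ = 1 := by
    intro θ
    rw [hz]
    simp only
    rw [Complex.norm_exp]
    norm_num [Complex.mul_re]
  have hzs : ∀ θ, z θ ∈ Metric.sphere (0:ℂ) 1 := by
    intro θ; rw [Metric.mem_sphere, Complex.dist_eq, sub_zero]; exact hznorm θ
  have hzcb : ∀ θ, z θ ∈ Metric.closedBall (0:ℂ) 1 :=
    fun θ => Metric.sphere_subset_closedBall (hzs θ)
  have hzinv : ∀ θ : ℝ, z (-θ) = (z θ)⁻¹ := by
    intro θ
    rw [hz]
    simp only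
    rw [← Complex.exp_neg]
    congr 1
    push_cast
    ring
  have hzinvnorm : ∀ θ : ℝ, ‖(z θ)⁻¹‖ = 1 := by
    intro θ; rw [← hzinv]; exact hznorm _
  have hzinv_cb : ∀ θ, (z θ)⁻¹ ∈ Metric.closedBall (0:ℂ) 1 := fun θ => by
    rw [← hzinv]; exact hzcb _
  have hzper : ∀ θ : ℝ, z (θ + 2 * π) = z θ := by
    intro θ
    rw [hz]
    simp only
    rw [show ((θ + 2 * π : ℝ) : ℂ) * Complex.I = (θ : ℂ) * Complex.I + 2 * π * Complex.I by
      push_cast; ring]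
    rw [Complex.exp_add, Complex.exp_two_pi_mul_I, mul_one]
  -- the two determinant functions
  set fP : ℂ → ℂ := fun ζ => (Ap ζ).det with hfP
  set fM : ℂ → ℂ := fun ζ => (B ζ).det with hfM
  have hdet_cont : ∀ (A : ℂ → Matrix (Fin n) (Fin n) ℂ),
      (∀ i j, ContinuousOn (fun ζ => A ζ i j) (Metric.closedBall (0 : ℂ) 1)) →
      ContinuousOn (fun ζ => (A ζ).det) (Metric.closedBall (0 : ℂ) 1) := by
    intro A hA
    rw [continuousOn_iff_continuous_restrict]
    have hco : Continuous fun x : Metric.closedBall (0:ℂ) 1 => A x :=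
      continuous_matrix fun i j => continuousOn_iff_continuous_restrict.mp (hA i j)
    exact hco.matrix_det
  have hdet_diff : ∀ (A : ℂ → Matrix (Fin n) (Fin n) ℂ),
      (∀ i j, DifferentiableOn ℂ (fun ζ => A ζ i j) (Metric.ball (0 : ℂ) 1)) →
      DifferentiableOn ℂ (fun ζ => (A ζ).det) (Metric.ball (0 : ℂ) 1) := by
    intro A hA
    simp only [Matrix.det_apply']
    apply DifferentiableOn.fun_sum
    intro σ _
    exact (DifferentiableOn.fun_finset_prod (u := Finset.univ)
      (f := fun i ζ => A ζ (σ i) i) (fun i _ => hA (σ i) i)).const_mul _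
  have hfPc : ContinuousOn fP (Metric.closedBall (0:ℂ) 1) := hdet_cont Ap hApc
  have hfMc : ContinuousOn fM (Metric.closedBall (0:ℂ) 1) := hdet_cont B hBc
  have hfPd : DifferentiableOn ℂ fP (Metric.ball (0:ℂ) 1) := hdet_diff Ap hApd
  have hfMd : DifferentiableOn ℂ fM (Metric.ball (0:ℂ) 1) := hdet_diff B hBd
  have hfPne : ∀ ζ ∈ Metric.closedBall (0:ℂ) 1, fP ζ ≠ 0 := fun ζ hζ =>
    ((Matrix.isUnit_iff_isUnit_det _).mp (hApinv ζ hζ)).ne_zero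
  have hfMne : ∀ ζ ∈ Metric.closedBall (0:ℂ) 1, fM ζ ≠ 0 := fun ζ hζ =>
    ((Matrix.isUnit_iff_isUnit_det _).mp (hBinv ζ hζ)).ne_zero
  -- minimum of the norms
  obtain ⟨zP, hzPmem, hzPmin⟩ := (isCompact_closedBall (0:ℂ) 1).exists_isMinOn
    ⟨0, by simp⟩ hfPc.norm
  obtain ⟨zM, hzMmem, hzMmin⟩ := (isCompact_closedBall (0:ℂ) 1).exists_isMinOn
    ⟨0, by simp⟩ hfMc.norm
  set εP : ℝ := ‖fP zP‖ with hεP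
  set εM : ℝ := ‖fM zM‖ with hεM
  have hεPpos : 0 < εP := norm_pos_iff.mpr (hfPne zP hzPmem)
  have hεMpos : 0 < εM := norm_pos_iff.mpr (hfMne zM hzMmem)
  have hεPle : ∀ ζ ∈ Metric.closedBall (0:ℂ) 1, εP ≤ ‖fP ζ‖ :=
    fun ζ hζ => isMinOn_iff.mp hzPmin ζ hζ
  have hεMle : ∀ ζ ∈ Metric.closedBall (0:ℂ) 1, εM ≤ ‖fM ζ‖ :=
    fun ζ hζ => isMinOn_iff.mp hzMmin ζ hζ
  -- uniform continuity and the choice of the radius r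
  have huP := (isCompact_closedBall (0:ℂ) 1).uniformContinuousOn_of_continuous hfPc
  have huM := (isCompact_closedBall (0:ℂ) 1).uniformContinuousOn_of_continuous hfMc
  rw [Metric.uniformContinuousOn_iff] at huP huM
  obtain ⟨δP, hδP, HP⟩ := huP εP hεPpos
  obtain ⟨δM, hδM, HM⟩ := huM εM hεMpos
  set δ : ℝ := min δP δM with hδ
  have hδpos : 0 < δ := lt_min hδP hδM
  set r : ℝ := max (1/2) (1 - δ/2) with hr
  have hr0 : (0:ℝ) < r := lt_of_lt_of_le (by norm_num) (le_max_left _ _)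
  have hr1 : r < 1 := by
    apply max_lt (by norm_num)
    linarith
  have hrz_cb : ∀ ζ : ℂ, ‖ζ‖ = 1 → (r:ℂ) * ζ ∈ Metric.closedBall (0:ℂ) 1 := by
    intro ζ hζ
    rw [Metric.mem_closedBall, Complex.dist_eq, sub_zero, norm_mul, hζ, mul_one,
      Complex.norm_real, Real.norm_eq_abs, abs_of_pos hr0]
    exact hr1.le
  have hrdist : ∀ ζ : ℂ, ‖ζ‖ = 1 → dist ((r:ℂ) * ζ) ζ < δ := by
    intro ζ hζ
    rw [Complex.dist_eq, show (r:ℂ) * ζ - ζ = ((r - 1 : ℝ) : ℂ) * ζ by push_cast; ring,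
      norm_mul, hζ, mul_one, Complex.norm_real, Real.norm_eq_abs, abs_of_neg (by linarith : r - 1 < 0)]
    have : 1 - r ≤ δ/2 := by
      have := le_max_right (1/2 : ℝ) (1 - δ/2)
      rw [← hr] at this
      linarith
    linarith
  -- the correction terms ρP ρM
  set qP : ℝ → ℂ := fun θ => fP ((r:ℂ) * z θ) / fP (z θ) with hqP
  set qM : ℝ → ℂ := fun θ => fM ((r:ℂ) * (z θ)⁻¹) / fM ((z θ)⁻¹) with hqM
  have hreP : ∀ θ, 0 < (qP θ).re := by
    intro θ
    apply re_div_pos' (hfPne _ (hzcb θ))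
    calc dist (fP ((r:ℂ) * z θ)) (fP (z θ)) < εP :=
          HP _ (hrz_cb _ (hznorm θ)) _ (hzcb θ)
            (lt_of_lt_of_le (hrdist _ (hznorm θ)) (min_le_left _ _))
      _ ≤ ‖fP (z θ)‖ := hεPle _ (hzcb θ)
  have hreM : ∀ θ, 0 < (qM θ).re := by
    intro θ
    apply re_div_pos' (hfMne _ (hzinv_cb θ))
    calc dist (fM ((r:ℂ) * (z θ)⁻¹)) (fM ((z θ)⁻¹)) < εM :=
          HM _ (hrz_cb _ (hzinvnorm θ)) _ (hzinv_cb θ)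
            (lt_of_lt_of_le (hrdist _ (hzinvnorm θ)) (min_le_right _ _))
      _ ≤ ‖fM ((z θ)⁻¹)‖ := hεMle _ (hzinv_cb θ)
  have hne_of_re : ∀ {u : ℂ}, 0 < u.re → u ≠ 0 := by
    intro u hu h0
    rw [h0] at hu
    simp at hu
  have hqPne : ∀ θ, qP θ ≠ 0 := fun θ => hne_of_re (hreP θ)
  have hqMne : ∀ θ, qM θ ≠ 0 := fun θ => hne_of_re (hreM θ)
  have hqPc : Continuous qP := by
    apply Continuous.div
    · exact hfPc.comp_continuous (continuous_const.mul hzc) (fun θ => hrz_cb _ (hznorm θ))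
    · exact hfPc.comp_continuous hzc hzcb
    · exact fun θ => hfPne _ (hzcb θ)
  have hqMc : Continuous qM := by
    have hzinvc : Continuous fun θ : ℝ => (z θ)⁻¹ := by
      have : (fun θ : ℝ => (z θ)⁻¹) = fun θ : ℝ => z (-θ) := by
        funext θ; rw [hzinv]
      rw [this]
      exact hzc.comp continuous_neg
    apply Continuous.div
    · exact hfMc.comp_continuous (continuous_const.mul hzinvc) (fun θ => hrz_cb _ (hzinvnorm θ))
    · exact hfMc.comp_continuous hzinvc hzinv_cb
    · exact fun θ => hfMne _ (hzinv_cb θ)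
  set ρP : ℝ → ℂ := fun θ => Complex.log (qP θ) with hρP
  set ρM : ℝ → ℂ := fun θ => Complex.log (qM θ) with hρM
  have hρPc : Continuous ρP := continuous_iff_continuousAt.mpr fun θ =>
    (continuousAt_clog (Complex.mem_slitPlane_iff.mpr (Or.inl (hreP θ)))).comp
      hqPc.continuousAt
  have hρMc : Continuous ρM := continuous_iff_continuousAt.mpr fun θ =>
    (continuousAt_clog (Complex.mem_slitPlane_iff.mpr (Or.inl (hreM θ)))).comp
      hqMc.continuousAt
  have hρPexp : ∀ θ, Complex.exp (ρP θ) = qP θ := fun θ => Complex.exp_log (hqPne θ)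
  have hρMexp : ∀ θ, Complex.exp (ρM θ) = qM θ := fun θ => Complex.exp_log (hqMne θ)
  -- the holomorphic lifts at radius r
  obtain ⟨vP, hvPc, hvPexp, hvPper⟩ := exists_circle_lift hfPc hfPd hfPne hr0 hr1
  obtain ⟨vM, hvMc, hvMexp, hvMper⟩ := exists_circle_lift hfMc hfMd hfMne hr0 hr1
  have hcm : ∀ θ : ℝ, circleMap 0 r θ = (r:ℂ) * z θ := by
    intro θ
    rw [hz]
    simp [circleMap]
  -- the comparison function G
  set G : ℝ → ℂ := fun θ => vP θ - ρP θ + (N:ℂ) * ((θ:ℂ) * Complex.I) + vM (-θ) - ρM θ with hG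
  have hGc : Continuous G := by
    apply Continuous.sub
    apply Continuous.add
    apply Continuous.add
    · exact hvPc.sub hρPc
    · exact continuous_const.mul (Complex.continuous_ofReal.mul continuous_const)
    · exact hvMc.comp continuous_neg
    · exact hρMc
  have hGexp : ∀ θ : ℝ, Complex.exp (g θ) = Complex.exp (G θ) := by
    intro θ
    have hgθ : Complex.exp (g θ) =
        fP (z θ) * Complex.exp ((N:ℂ) * ((θ:ℂ) * Complex.I)) * fM ((z θ)⁻¹) := by
      rw [hlog θ, hfact _ (hzs θ), Matrix.det_mul, Matrix.det_mul, Matrix.det_diagonal]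
      have hprod : (∏ j, Complex.exp ((θ:ℂ) * Complex.I) ^ ind j) =
          Complex.exp ((N:ℂ) * ((θ:ℂ) * Complex.I)) := by
        rw [finset_prod_zpow' _ _ (Complex.exp_ne_zero _), ← hN, Complex.exp_int_mul]
      rw [hprod]
    have hGval : Complex.exp (G θ) =
        fP (z θ) * Complex.exp ((N:ℂ) * ((θ:ℂ) * Complex.I)) * fM ((z θ)⁻¹) := by
      rw [hG]
      simp only
      rw [Complex.exp_sub, Complex.exp_add, Complex.exp_add, Complex.exp_sub]
      rw [hvPexp θ, hρPexp θ, hvMexp (-θ), hρMexp θ, hcm θ, hcm (-θ), hzinv θ]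
      rw [hqP, hqM]
      simp only
      have h1 := hfPne _ (hzcb θ)
      have h2 := hfPne _ (hrz_cb _ (hznorm θ))
      have h3 := hfMne _ (hzinv_cb θ)
      have h4 := hfMne _ (hrz_cb _ (hzinvnorm θ))
      have e1 : ∀ (a b : ℂ), a ≠ 0 → b ≠ 0 → a / (a / b) = b := by
        intro a b ha hb
        field_simp
      rw [mul_div_assoc, e1 _ _ h2 h1, e1 _ _ h4 h3]
    rw [hgθ, hGval]
  -- comparison of the two lifts
  have hdiffconst : g (2 * π) - G (2 * π) = g 0 - G 0 := by
    apply const_of_int_lift ((hg.sub hGc)) _ (2 * π) 0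
    intro θ
    obtain ⟨k, hk⟩ := Complex.exp_eq_exp_iff_exists_int.mp (hGexp θ)
    exact ⟨k, by rw [Pi.sub_apply, hk]; ring⟩
  -- periodicity values
  have hvP2 : vP (2 * π) = vP 0 := by
    have := hvPper 0
    rwa [zero_add] at this
  have hvM2 : vM (-(2 * π)) = vM 0 := by
    have := hvMper (-(2 * π))
    rw [show -(2 * π) + 2 * π = 0 by ring] at this
    exact this.symm
  have hz2 : z (2 * π) = z 0 := by
    have := hzper 0
    rwa [zero_add] at this
  have hρP2 : ρP (2 * π) = ρP 0 := by
    rw [hρP]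
    simp only
    rw [hqP]
    simp only
    rw [hz2]
  have hρM2 : ρM (2 * π) = ρM 0 := by
    rw [hρM]
    simp only
    rw [hqM]
    simp only
    rw [hz2]
  -- conclusion
  have hGdiff : G (2 * π) - G 0 = (N:ℂ) * (((2 * π : ℝ):ℂ) * Complex.I) := by
    rw [hG]
    simp only
    rw [hvP2, hρP2, hρM2, hvM2, neg_zero]
    push_cast
    ring
  have hkey : 2 * (π:ℂ) * Complex.I * (w:ℂ) = 2 * (π:ℂ) * Complex.I * (N:ℂ) := by
    rw [← hw]
    have hgg : g (2 * π) - g 0 = G (2 * π) - G 0 := by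
      linear_combination hdiffconst
    rw [hgg, hGdiff]
    push_cast
    ring
  have h2πI : (2 * (π:ℂ) * Complex.I) ≠ 0 := by
    simp [Real.pi_ne_zero, Complex.I_ne_zero, Complex.ofReal_ne_zero]
  have hwN : (w:ℂ) = (N:ℂ) := mul_left_cancel₀ h2πI hkey
  have : w = N := by exact_mod_cast hwN
  rw [this]
end

section
/- Let U ⊆ ℂ be a connected open set, X a Banach space, and P : U → B(X) a holomorphic family of projections (P(t)² = P(t) for all t ∈ U). Then the ranges of P(t) for different t ∈ U are all isomorphic as Banach spaces; more precisely, for any t₀ ∈ U there is a neighborhood V of t₀ and a holomorphic family S : V → B(X) of invertible operators with S(t) (range P(t₀)) = range P(t). -/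
open ContinuousLinearMap

/-- A continuous linear equivalence mapping a submodule onto a set equal to another submodule
gives an isomorphism between the two submodules. -/
noncomputable def cleOfImage {X : Type*} [NormedAddCommGroup X] [NormedSpace ℂ X]
    (e : X ≃L[ℂ] X) (p q : Submodule ℂ X) (h : ⇑e '' (p : Set X) = q) : p ≃L[ℂ] q := by
  have hq : p.map (e.toLinearEquiv : X →ₗ[ℂ] X) = q := by
    apply SetLike.coe_injective
    rw [Submodule.map_coe]
    exact h
  subst hq
  exact ⟨e.toLinearEquiv.submoduleMap p,
    (e.continuous.comp continuous_subtype_val).subtype_mk _,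
    (e.symm.continuous.comp continuous_subtype_val).subtype_mk _⟩

/-- For a holomorphic family `P` of projections on a Banach space over a connected open
set `U ⊆ ℂ`, the ranges `P(t)(X)` are all isomorphic; more precisely, near any `t₀ ∈ U`
there is a holomorphic family of invertible operators carrying `range P(t₀)` to
`range P(t)`. -/
theorem holomorphic_family_of_projections_ranges {X : Type*} [NormedAddCommGroup X]
    [NormedSpace ℂ X] [CompleteSpace X] (U : Set ℂ) (hU : IsOpen U) (hUconn : IsConnected U)
    (P : ℂ → X →L[ℂ] X) (hP : DifferentiableOn ℂ P U)
    (hproj : ∀ t ∈ U, P t ∘L P t = P t) :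
    (∀ s ∈ U, ∀ t ∈ U,
        Nonempty (LinearMap.range (P s : X →ₗ[ℂ] X) ≃L[ℂ] LinearMap.range (P t : X →ₗ[ℂ] X))) ∧
      ∀ t₀ ∈ U, ∃ V : Set ℂ, IsOpen V ∧ t₀ ∈ V ∧ V ⊆ U ∧
        ∃ S : ℂ → X ≃L[ℂ] X,
          DifferentiableOn ℂ (fun t => (S t : X →L[ℂ] X)) V ∧
          ∀ t ∈ V, (S t : X → X) '' (LinearMap.range (P t₀ : X →ₗ[ℂ] X) : Set X)
            = (LinearMap.range (P t : X →ₗ[ℂ] X) : Set X) := by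
  -- projections as ring identities
  have hmul : ∀ t ∈ U, P t * P t = P t := fun t ht => hproj t ht
  -- Local part
  have hloc : ∀ t₀ ∈ U, ∃ V : Set ℂ, IsOpen V ∧ t₀ ∈ V ∧ V ⊆ U ∧
      ∃ S : ℂ → X ≃L[ℂ] X,
        DifferentiableOn ℂ (fun t => (S t : X →L[ℂ] X)) V ∧
        ∀ t ∈ V, (S t : X → X) '' (LinearMap.range (P t₀ : X →ₗ[ℂ] X) : Set X)
          = (LinearMap.range (P t : X →ₗ[ℂ] X) : Set X) := by
    intro t₀ ht₀
    set Q : ℂ → X →L[ℂ] X := fun t => P t * P t₀ + (1 - P t) * (1 - P t₀) with hQ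
    have hQdiff : DifferentiableOn ℂ Q U :=
      (hP.mul (differentiableOn_const _)).add
        (((differentiableOn_const _).sub hP).mul (differentiableOn_const _))
    have hQ0 : Q t₀ = 1 := by
      have h0 := hmul t₀ ht₀
      simp only [hQ, mul_sub, sub_mul, mul_one, one_mul, h0]
      abel
    -- intertwining: Q t * P t₀ = P t * Q t for t ∈ U
    have hint : ∀ t ∈ U, Q t * P t₀ = P t * Q t := by
      intro t ht
      have h0 := hmul t₀ ht₀
      have h1 := hmul t ht
      simp only [hQ, add_mul, mul_add, mul_sub, sub_mul, mul_one, one_mul, mul_assoc, h0, h1,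
        ← mul_assoc (P t) (P t) (P t₀)]
      abel
    -- V : where Q is invertible
    have hVopen : IsOpen (U ∩ Q ⁻¹' {f : X →L[ℂ] X | IsUnit f}) :=
      hQdiff.continuousOn.isOpen_inter_preimage hU Units.isOpen
    refine ⟨U ∩ Q ⁻¹' {f | IsUnit f}, hVopen, ⟨ht₀, by simp [hQ0]⟩, Set.inter_subset_left, ?_⟩
    classical
    refine ⟨fun t => if h : IsUnit (Q t) then ContinuousLinearEquiv.unitsEquiv ℂ X h.unit
      else ContinuousLinearEquiv.refl ℂ X, ?_, ?_⟩
    · refine (hQdiff.mono Set.inter_subset_left).congr fun t ht => ?_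
      have hu : IsUnit (Q t) := ht.2
      simp only [dif_pos hu]
      rfl
    · intro t ht
      have hu : IsUnit (Q t) := ht.2
      have hintt := hint t ht.1
      have hrange : ∀ u : ℂ, (LinearMap.range (P u : X →ₗ[ℂ] X) : Set X) = Set.range (P u) := by
        intro u; ext x; simp [LinearMap.mem_range]
      rw [hrange, hrange]
      have h1 : (⇑(Q t)) '' Set.range (P t₀) = Set.range (⇑(Q t) ∘ ⇑(P t₀)) :=
        (Set.range_comp _ _).symm
      have h2 : ⇑(Q t) ∘ ⇑(P t₀) = ⇑(P t) ∘ ⇑(Q t) := by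
        have : (Q t).comp (P t₀) = (P t).comp (Q t) := hintt
        ext x
        exact DFunLike.congr_fun this x
      have h3 : Set.range (⇑(P t) ∘ ⇑(Q t)) = ⇑(P t) '' Set.range (Q t) :=
        Set.range_comp _ _
      have h4 : Set.range ⇑(Q t) = Set.univ := by
        rw [Set.range_eq_univ]
        intro y
        obtain ⟨x, hx⟩ := (ContinuousLinearEquiv.unitsEquiv ℂ X hu.unit).surjective y
        exact ⟨x, by simpa [ContinuousLinearEquiv.unitsEquiv_apply, hu.unit_spec] using hx⟩
      simp only [dif_pos hu]
      have hco : ⇑(ContinuousLinearEquiv.unitsEquiv ℂ X hu.unit) = ⇑(Q t) := by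
        ext x
        simp [ContinuousLinearEquiv.unitsEquiv_apply, hu.unit_spec]
      rw [hco, h1, h2, h3, h4, Set.image_univ]
  -- Global part via connectedness
  refine ⟨?_, hloc⟩
  -- neighborhood isomorphism
  have hnb : ∀ t ∈ U, ∃ V : Set ℂ, IsOpen V ∧ t ∈ V ∧ V ⊆ U ∧
      ∀ t' ∈ V, Nonempty (LinearMap.range (P t : X →ₗ[ℂ] X) ≃L[ℂ] LinearMap.range (P t' : X →ₗ[ℂ] X)) := by
    intro t ht
    obtain ⟨V, hVo, htV, hVU, S, _, hS⟩ := hloc t ht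
    exact ⟨V, hVo, htV, hVU, fun t' ht' =>
      ⟨cleOfImage (S t') _ _ (hS t' ht')⟩⟩
  intro s hs t ht
  by_contra hne
  set A : Set ℂ := {t ∈ U | Nonempty (LinearMap.range (P s : X →ₗ[ℂ] X) ≃L[ℂ] LinearMap.range (P t : X →ₗ[ℂ] X))} with hA
  set B : Set ℂ := {t ∈ U | ¬ Nonempty (LinearMap.range (P s : X →ₗ[ℂ] X) ≃L[ℂ] LinearMap.range (P t : X →ₗ[ℂ] X))} with hB
  have hAopen : IsOpen A := by
    rw [isOpen_iff_forall_mem_open]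
    rintro a ⟨haU, ⟨e⟩⟩
    obtain ⟨V, hVo, haV, hVU, hViso⟩ := hnb a haU
    exact ⟨V, fun t' ht' => ⟨hVU ht', (hViso t' ht').elim fun e' => ⟨e.trans e'⟩⟩, hVo, haV⟩
  have hBopen : IsOpen B := by
    rw [isOpen_iff_forall_mem_open]
    rintro a ⟨haU, hano⟩
    obtain ⟨V, hVo, haV, hVU, hViso⟩ := hnb a haU
    refine ⟨V, fun t' ht' => ⟨hVU ht', fun ⟨e⟩ => hano ?_⟩, hVo, haV⟩
    exact (hViso t' ht').elim fun e' => ⟨e.trans e'.symm⟩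
  have := hUconn.isPreconnected A B hAopen hBopen
    (fun x hx => by by_cases h : Nonempty (LinearMap.range (P s : X →ₗ[ℂ] X) ≃L[ℂ] LinearMap.range (P x : X →ₗ[ℂ] X))
                    exacts [Or.inl ⟨hx, h⟩, Or.inr ⟨hx, h⟩])
    ⟨s, hs, hs, ⟨ContinuousLinearEquiv.refl ℂ _⟩⟩ ⟨t, ht, ht, hne⟩
  obtain ⟨x, -, ⟨-, hx1⟩, ⟨-, hx2⟩⟩ := this
  exact hx2 hx1
end
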